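/- Let D be a real symmetric n×n matrix and P a diagonal n×n matrix with diagonal entries ±1 satisfying P D = −D P. Let Π be the orthogonal projection of ℝⁿ onto the kernel of D. Then trace(P) = trace(P Π). Equivalently, the nonzero eigenvalues of D² are distributed equally between the +1 and −1 eigenspaces of P, counted with multiplicity. -/
import Mathlib

open Matrix

lemma exists_pseudo (n : ℕ) (D : Matrix (Fin n) (Fin n) ℝ) (hD : D.IsSymm) :
    ∃ B Q : Matrix (Fin n) (Fin n) ℝ, D * B = Q ∧ B * D = Q ∧ Q * Q = Q ∧ Q.IsSymm ∧
      ∀ v, Q.mulVec v = 0 ↔ D.mulVec v = 0 := by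
  have hH : D.IsHermitian := by
    rw [Matrix.IsHermitian, conjTranspose_eq_transpose_of_trivial]; exact hD
  set U : Matrix (Fin n) (Fin n) ℝ := (hH.eigenvectorUnitary : Matrix (Fin n) (Fin n) ℝ) with hU
  set lam : Fin n → ℝ := hH.eigenvalues with hlam
  have hUU : star U * U = 1 := (Matrix.mem_unitaryGroup_iff').mp hH.eigenvectorUnitary.2
  have hspec : D = U * diagonal lam * star U := by
    have := hH.spectral_theorem
    simpa using this
  classical
  set g : Fin n → ℝ := fun i => if lam i = 0 then 0 else (lam i)⁻¹ with hg
  set e : Fin n → ℝ := fun i => if lam i = 0 then 0 else 1 with he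
  have hconj : ∀ f h : Fin n → ℝ,
      (U * diagonal f * star U) * (U * diagonal h * star U)
        = U * diagonal (fun i => f i * h i) * star U := by
    intro f h
    simp only [Matrix.mul_assoc]
    rw [← Matrix.mul_assoc (star U) U (diagonal h * star U), hUU, Matrix.one_mul,
      ← Matrix.mul_assoc (diagonal f), diagonal_mul_diagonal]
  have hle : (fun i => lam i * g i) = e := by
    funext i; by_cases h : lam i = 0 <;> simp [hg, he, h, mul_inv_cancel₀]
  have hgl : (fun i => g i * lam i) = e := by
    funext i; by_cases h : lam i = 0 <;> simp [hg, he, h, inv_mul_cancel₀]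
  have hee : (fun i => e i * e i) = e := by
    funext i; by_cases h : lam i = 0 <;> simp [he, h]
  refine ⟨U * diagonal g * star U, U * diagonal e * star U, ?_, ?_, ?_, ?_, ?_⟩
  · rw [hspec, hconj, hle]
  · rw [hspec, hconj, hgl]
  · rw [hconj, hee]
  · rw [Matrix.IsSymm, ← conjTranspose_eq_transpose_of_trivial]
    simp [Matrix.mul_assoc, conjTranspose_mul, diagonal_conjTranspose,
      Matrix.star_eq_conjTranspose, conjTranspose_eq_transpose_of_trivial, transpose_transpose]
  · intro v
    have key : ∀ (f : Fin n → ℝ), (U * diagonal f * star U).mulVec v = 0 ↔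
        ∀ i, f i * (star U).mulVec v i = 0 := by
      intro f
      rw [← Matrix.mulVec_mulVec, ← Matrix.mulVec_mulVec]
      constructor
      · intro h i
        have h2 : (diagonal f).mulVec ((star U).mulVec v) = 0 := by
          have := congrArg (fun w => (star U).mulVec w) h
          simpa [Matrix.mulVec_mulVec, ← Matrix.mul_assoc, hUU, Matrix.mulVec_zero] using this
        have := congrFun h2 i
        simpa [Matrix.mulVec_diagonal] using this
      · intro h
        have h2 : (diagonal f).mulVec ((star U).mulVec v) = 0 := by
          funext i; simpa [Matrix.mulVec_diagonal] using h i
        rw [h2, Matrix.mulVec_zero]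
    rw [hspec, key, key]
    constructor
    · intro h i
      by_cases hl : lam i = 0
      · simp [hl]
      · have := h i
        rw [he] at this
        simp only [if_neg hl, one_mul] at this
        simp [this]
    · intro h i
      by_cases hl : lam i = 0
      · simp [he, hl]
      · have := h i
        rw [he]
        simp only [if_neg hl, one_mul]
        rcases mul_eq_zero.mp this with h' | h'
        · exact absurd h' hl
        · exact h'

lemma matrix_ext_mulVec {n : ℕ} {A B : Matrix (Fin n) (Fin n) ℝ}
    (h : ∀ v, A.mulVec v = B.mulVec v) : A = B := by
  apply Matrix.toLin'.injective
  ext v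
  simp [Matrix.toLin'_apply, h]


/-- **Euler characteristic equals supertrace of the kernel projection.**
If `D` is real symmetric, `P = diag(p)` with `p i = ±1` satisfies `P D = -D P`, and
`Π` is the orthogonal projection onto `ker D` (characterized as the symmetric
idempotent matrix whose fixed vectors are exactly the kernel of `D`), then
`tr(P) = tr(P Π)`. -/
theorem supertrace_eq_supertrace_kernel_projection
    (n : ℕ) (D : Matrix (Fin n) (Fin n) ℝ) (hD : D.IsSymm)
    (p : Fin n → ℝ) (hp : ∀ i, p i = 1 ∨ p i = -1)
    (P : Matrix (Fin n) (Fin n) ℝ) (hP : P = Matrix.diagonal p)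
    (hPD : P * D = -(D * P))
    (Pi : Matrix (Fin n) (Fin n) ℝ)
    (hPi_symm : Pi.IsSymm) (hPi_idem : Pi * Pi = Pi)
    (hPi_range : ∀ v : Fin n → ℝ, Pi.mulVec v = v ↔ D.mulVec v = 0) :
    P.trace = (P * Pi).trace := by
  obtain ⟨B, Q, hDB, hBD, hQQ, hQsymm, hQker⟩ := exists_pseudo n D hD
  have hRker : ∀ v, (1 - Q).mulVec v = v ↔ D.mulVec v = 0 := by
    intro v
    rw [← hQker v, Matrix.sub_mulVec, Matrix.one_mulVec, sub_eq_self]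
  have hR_idem : (1 - Q) * (1 - Q) = 1 - Q := by
    have h : (1 - Q) * (1 - Q) = 1 - Q - Q + Q * Q := by noncomm_ring
    rw [h, hQQ]; abel
  have claim1 : Pi * (1 - Q) = 1 - Q := by
    apply matrix_ext_mulVec
    intro v
    rw [← Matrix.mulVec_mulVec]
    apply (hPi_range _).mpr
    apply (hRker _).mp
    rw [Matrix.mulVec_mulVec, hR_idem]
  have claim2 : (1 - Q) * Pi = Pi := by
    apply matrix_ext_mulVec
    intro v
    rw [← Matrix.mulVec_mulVec]
    apply (hRker _).mpr
    apply (hPi_range _).mp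
    rw [Matrix.mulVec_mulVec, hPi_idem]
  have hRsymm : (1 - Q)ᵀ = 1 - Q := by
    rw [Matrix.transpose_sub, Matrix.transpose_one, hQsymm]
  have hPiQ : Pi = 1 - Q := by
    have t := congrArg Matrix.transpose claim1
    rw [Matrix.transpose_mul, hRsymm, hPi_symm] at t
    exact claim2.symm.trans t
  have hPQ0 : (P * Q).trace = 0 := by
    have h1 : (P * Q).trace = -((P * Q).trace) := by
      calc (P * Q).trace = (P * (D * B)).trace := by rw [hDB]
        _ = ((P * D) * B).trace := by rw [Matrix.mul_assoc]
        _ = ((-(D * P)) * B).trace := by rw [hPD]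
        _ = -((D * (P * B)).trace) := by rw [neg_mul, trace_neg, Matrix.mul_assoc]
        _ = -(((P * B) * D).trace) := by rw [Matrix.trace_mul_comm]
        _ = -((P * (B * D)).trace) := by rw [Matrix.mul_assoc]
        _ = -((P * Q).trace) := by rw [hBD]
    linarith
  rw [hPiQ, Matrix.mul_sub, Matrix.mul_one, Matrix.trace_sub, hPQ0, sub_zero]
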